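/- Let X = {x ∈ ℝ^d : x_i ≥ 0 for all i ∈ I} for some I ⊆ [d], let Z ⊆ {0,1}^d be such that for every pair i, j ∈ [d] there exists z ∈ Z with z_i = z_j = 1, let a ∈ ℝ^d have a_i ≠ 0 for all i, and let h : ℝ → ℝ ∪ {+∞} be nonlinear, proper, lower semicontinuous, convex with h(0) = 0. Let T = {(τ, x, z) ∈ ℝ × X × Z : h(aᵀx) ≤ τ and x_i(1 − z_i) = 0 for all i ∈ [d]}. Then for every (τ, x, z) in the closed convex hull of T and every x̄ ∈ X with aᵀx̄ = 0, the point (τ, x + x̄, z) also lies in the closed convex hull of T. -/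

import Mathlib

open scoped Classical

open Finset Filter

/-- Recessive directions of `cl conv(T)` in the sign-constrained case: adding any
`x̄ ∈ X` with `aᵀx̄ = 0` stays in `cl conv(T)`. -/
theorem clconv_T_recession_signed {d : ℕ} (I : Set (Fin d))
    (Z : Set (Fin d → ℝ)) (hZ01 : ∀ z ∈ Z, ∀ i, z i = 0 ∨ z i = 1)
    (hZpair : ∀ i j : Fin d, ∃ z ∈ Z, z i = 1 ∧ z j = 1)
    (a : Fin d → ℝ) (ha : ∀ i, a i ≠ 0)
    (h : ℝ → EReal)
    (hbot : ∀ x : ℝ, h x ≠ ⊥) (hnetop : ∃ x : ℝ, h x ≠ ⊤)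
    (hlsc : LowerSemicontinuous h)
    (hconv : Convex ℝ {u : ℝ × ℝ | h u.2 ≤ (u.1 : EReal)})
    (h0 : h 0 = 0)
    -- `h` is nonlinear: its epigraph contains no line
    (hnl : ¬ ∃ (u v : ℝ × ℝ), v ≠ 0 ∧
      ∀ t : ℝ, u + t • v ∈ {q : ℝ × ℝ | h q.2 ≤ (q.1 : EReal)}) :
    ∀ p ∈ closure (convexHull ℝ
      {p : ℝ × (Fin d → ℝ) × (Fin d → ℝ) |
        (∀ i ∈ I, 0 ≤ p.2.1 i) ∧ p.2.2 ∈ Z ∧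
        h (∑ i, a i * p.2.1 i) ≤ (p.1 : EReal) ∧
        ∀ i, p.2.1 i * (1 - p.2.2 i) = 0}),
    ∀ xbar : Fin d → ℝ, (∀ i ∈ I, 0 ≤ xbar i) → (∑ i, a i * xbar i) = 0 →
      (p.1, p.2.1 + xbar, p.2.2) ∈ closure (convexHull ℝ
        {p : ℝ × (Fin d → ℝ) × (Fin d → ℝ) |
          (∀ i ∈ I, 0 ≤ p.2.1 i) ∧ p.2.2 ∈ Z ∧
          h (∑ i, a i * p.2.1 i) ≤ (p.1 : EReal) ∧
          ∀ i, p.2.1 i * (1 - p.2.2 i) = 0}) := by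
  intro p hp xbar hxbarI hxbar0
  set T : Set (ℝ × (Fin d → ℝ) × (Fin d → ℝ)) :=
    {p : ℝ × (Fin d → ℝ) × (Fin d → ℝ) |
      (∀ i ∈ I, 0 ≤ p.2.1 i) ∧ p.2.2 ∈ Z ∧
      h (∑ i, a i * p.2.1 i) ≤ (p.1 : EReal) ∧
      ∀ i, p.2.1 i * (1 - p.2.2 i) = 0} with hT
  set C := closure (convexHull ℝ T) with hCdef
  have hCconv : Convex ℝ C := (convex_convexHull ℝ T).closure
  set c : ℝ × (Fin d → ℝ) × (Fin d → ℝ) := (0, xbar, 0) with hc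
  -- auxiliary quantities for the decomposition of xbar
  set c' : Fin d → ℝ := fun i => a i * xbar i with hc'
  set cp : Fin d → ℝ := fun i => max (c' i) 0 with hcp
  set cn : Fin d → ℝ := fun i => max (-(c' i)) 0 with hcn
  have hcpn : ∀ i, cp i - cn i = c' i := fun i => max_zero_sub_max_neg_zero_eq_self (c' i)
  have hcp0 : ∀ i, 0 ≤ cp i := fun i => le_max_right _ _
  have hcn0 : ∀ i, 0 ≤ cn i := fun i => le_max_right _ _
  set S : ℝ := ∑ i, cp i with hSdef
  have hS0 : 0 ≤ S := Finset.sum_nonneg fun i _ => hcp0 i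
  have hsum_c : ∑ i, c' i = 0 := hxbar0
  have hcn_sum : ∑ i, cn i = S := by
    have h1 : ∑ i, (cp i - cn i) = 0 := by
      rw [Finset.sum_congr rfl fun i _ => hcpn i]; exact hsum_c
    rw [Finset.sum_sub_distrib] at h1
    linarith
  -- key single-point fact
  have key : ∀ q ∈ T, q + c ∈ C := by
    intro q hq
    obtain ⟨hqI, hqZ, hqh, hqsupp⟩ := hq
    rcases eq_or_lt_of_le hS0 with hS | hS
    · -- S = 0, so xbar = 0 and c = 0
      have hxbar : xbar = 0 := by
        funext i
        have hcpz : cp i = 0 := by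
          have := (Finset.sum_eq_zero_iff_of_nonneg (fun i _ => hcp0 i)).1 hS.symm
          exact this i (Finset.mem_univ i)
        have hcnz : cn i = 0 := by
          have := (Finset.sum_eq_zero_iff_of_nonneg (fun i _ => hcn0 i)).1
            (hcn_sum.trans hS.symm)
          exact this i (Finset.mem_univ i)
        have : c' i = 0 := by rw [← hcpn i, hcpz, hcnz]; ring
        have := this
        rw [hc'] at this
        simpa using (mul_eq_zero.1 this).resolve_left (ha i)
      have hc0 : c = 0 := by rw [hc, hxbar]; rfl
      rw [hc0, add_zero]
      exact subset_closure (subset_convexHull ℝ T ⟨hqI, hqZ, hqh, hqsupp⟩)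
    · -- S > 0
      choose zc hzcZ hzc1 hzc2 using hZpair
      set w : Fin d → Fin d → Fin d → ℝ := fun i j k =>
        cp i * cn j * ((if k = i then (1:ℝ) else 0) - (if k = j then (1:ℝ) else 0))
          / (S * a k) with hwdef
      -- the decomposition sums to xbar
      have hw_sum : ∀ k, (∑ ij : Fin d × Fin d, w ij.1 ij.2 k) = xbar k := by
        intro k
        have hak := ha k
        rw [Fintype.sum_prod_type]
        have step : ∀ i, ∑ j, w i j k
            = (cp i * (if k = i then (1:ℝ) else 0) * S - cp i * cn k) / (S * a k) := by
          intro i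
          rw [← Finset.sum_div]
          congr 1
          have : ∀ j, cp i * cn j * ((if k = i then (1:ℝ) else 0) - (if k = j then (1:ℝ) else 0))
              = cp i * (if k = i then (1:ℝ) else 0) * cn j
                - cp i * (cn j * (if k = j then (1:ℝ) else 0)) := by
            intro j; ring
          rw [Finset.sum_congr rfl fun j _ => this j, Finset.sum_sub_distrib,
            ← Finset.mul_sum, ← Finset.mul_sum, hcn_sum]
          congr 1
          congr 1
          simp [mul_ite, Finset.sum_ite_eq]
        rw [Finset.sum_congr rfl fun i _ => step i, ← Finset.sum_div]
        rw [Finset.sum_sub_distrib, ← Finset.sum_mul, ← Finset.sum_mul]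
        have e1 : ∑ i, cp i * (if k = i then (1:ℝ) else 0) = cp k := by
          simp [mul_ite, Finset.sum_ite_eq]
        rw [e1, ← hSdef]
        have : (cp k * S - S * cn k) / (S * a k) = (cp k - cn k) / a k := by
          rw [mul_comm (cp k) S, ← mul_sub, mul_div_mul_left _ _ (ne_of_gt hS)]
        rw [this, hcpn k]
        simp only [hc']
        exact mul_div_cancel_left₀ _ hak
      -- a-weighted sum of each w i j is zero
      have hw_aw : ∀ i j, (∑ k, a k * w i j k) = 0 := by
        intro i j
        have step : ∀ k, a k * w i j k
            = cp i * cn j * ((if k = i then (1:ℝ) else 0) - (if k = j then (1:ℝ) else 0)) / S := by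
          intro k
          have hak := ha k
          rw [hwdef]
          field_simp [hak, (ne_of_gt hS : S ≠ 0)]
        rw [Finset.sum_congr rfl fun k _ => step k, ← Finset.sum_div]
        have : ∑ k, cp i * cn j * ((if k = i then (1:ℝ) else 0) - (if k = j then (1:ℝ) else 0))
            = cp i * cn j * ∑ k, ((if k = i then (1:ℝ) else 0) - (if k = j then (1:ℝ) else 0)) := by
          rw [Finset.mul_sum]
        rw [this, Finset.sum_sub_distrib]
        simp [Finset.sum_ite_eq']
      have hwk : ∀ i j k, w i j k
          = cp i * cn j * ((if k = i then (1:ℝ) else 0) - (if k = j then (1:ℝ) else 0))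
            / (S * a k) := by
        intro i j k; rw [hwdef]
      -- sign condition
      have hw_sign : ∀ i j k, k ∈ I → 0 ≤ w i j k := by
        intro i j k hk
        by_cases hki : k = i
        · subst hki
          by_cases hkj : k = j
          · subst hkj
            rw [hwk]; simp
          · rw [hwk, if_pos rfl, if_neg hkj]
            rcases eq_or_lt_of_le (hcp0 k) with hz | hz
            · rw [← hz]; simp
            · have hck : 0 < c' k := by
                by_contra h'
                push_neg at h'
                have hcz : cp k = 0 := by simp only [hcp]; exact max_eq_right h'
                rw [hcz] at hz; exact lt_irrefl 0 hz
              have hxk : 0 ≤ xbar k := hxbarI k hk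
              have hck' : 0 < a k * xbar k := by simpa [hc'] using hck
              have hak : 0 < a k := by
                rcases lt_trichotomy (a k) 0 with h' | h' | h'
                · nlinarith
                · rw [h'] at hck'; simp at hck'
                · exact h'
              exact div_nonneg (by nlinarith [mul_nonneg (hcp0 k) (hcn0 j)])
                (le_of_lt (mul_pos hS hak))
        · by_cases hkj : k = j
          · subst hkj
            rw [hwk, if_neg hki, if_pos rfl]
            rcases eq_or_lt_of_le (hcn0 k) with hz | hz
            · rw [← hz]; simp
            · have hck : c' k < 0 := by
                by_contra h'
                push_neg at h'
                have hcz : cn k = 0 := by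
                  simp only [hcn]; exact max_eq_right (by linarith)
                rw [hcz] at hz; exact lt_irrefl 0 hz
              have hxk : 0 ≤ xbar k := hxbarI k hk
              have hck' : a k * xbar k < 0 := by simpa [hc'] using hck
              have hak : a k < 0 := by nlinarith
              refine div_nonneg_iff.2 (Or.inr ⟨?_, ?_⟩)
              · nlinarith [mul_nonneg (hcp0 i) (hcn0 k)]
              · exact le_of_lt (mul_neg_of_pos_of_neg hS hak)
          · rw [hwk, if_neg hki, if_neg hkj]; simp
      -- support condition
      have hw_supp : ∀ i j k, w i j k * (1 - zc i j k) = 0 := by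
        intro i j k
        by_cases hki : k = i
        · rw [hki, hzc1 i j, sub_self, mul_zero]
        · by_cases hkj : k = j
          · rw [hkj, hzc2 i j, sub_self, mul_zero]
          · rw [hwk, if_neg hki, if_neg hkj]; simp
      -- the approximating family
      set zsum : Fin d → ℝ := ∑ ij : Fin d × Fin d, zc ij.1 ij.2 with hzsum
      set D : ℝ := (d : ℝ) ^ 2 with hD
      have hD0 : 0 ≤ D := by positivity
      set F : ℝ → ℝ × (Fin d → ℝ) × (Fin d → ℝ) := fun t =>
        ((1 - D * t) * q.1, (1 - D * t) • q.2.1 + xbar, (1 - D * t) • q.2.2 + t • zsum)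
        with hF
      have hFcont : Continuous F := by
        apply Continuous.prodMk
        · fun_prop
        · apply Continuous.prodMk <;> fun_prop
      set ε : ℕ → ℝ := fun n => (1 / ((n : ℝ) + 1)) * (1 / (D + 1)) with hε
      have hε_pos : ∀ n, 0 < ε n := by
        intro n
        rw [hε]
        positivity
      have hε_le : ∀ n, D * ε n ≤ 1 := by
        intro n
        rw [hε]
        have h1 : (1 : ℝ) / ((n : ℝ) + 1) ≤ 1 := by
          rw [div_le_one (by positivity)]; simp
        have h2 : D * (1 / (D + 1)) ≤ 1 := by
          rw [mul_one_div, div_le_one (by positivity)]; linarith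
        calc D * (1 / ((n : ℝ) + 1) * (1 / (D + 1)))
            ≤ D * (1 * (1 / (D + 1))) := by
              apply mul_le_mul_of_nonneg_left _ hD0
              apply mul_le_mul_of_nonneg_right h1 (by positivity)
          _ = D * (1 / (D + 1)) := by ring
          _ ≤ 1 := h2
      have hε_tendsto : Tendsto ε atTop (nhds 0) := by
        have h1 := tendsto_one_div_add_atTop_nhds_zero_nat (𝕜 := ℝ)
        have := h1.mul_const (1 / (D + 1))
        simpa [hε] using this
      have hF0 : F 0 = q + c := by
        rw [hF, hc]
        simp only [mul_zero, sub_zero, one_mul, one_smul, zero_smul, add_zero]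
        ext <;> simp
      have hmem : ∀ n, F (ε n) ∈ convexHull ℝ T := by
        intro n
        set t := ε n with ht
        have ht0 : 0 < t := hε_pos n
        have ht1 : D * t ≤ 1 := hε_le n
        -- weights and points
        set wt : Option (Fin d × Fin d) → ℝ := fun o =>
          match o with
          | none => 1 - D * t
          | some _ => t
          with hwt
        set pt : Option (Fin d × Fin d) → ℝ × (Fin d → ℝ) × (Fin d → ℝ) := fun o =>
          match o with
          | none => q
          | some ij => ((0 : ℝ), t⁻¹ • w ij.1 ij.2, zc ij.1 ij.2)
          with hpt
        have hcard : (Finset.univ : Finset (Fin d × Fin d)).card = d * d := by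
          simp [Finset.card_univ]
        have hwt_sum : ∑ o : Option (Fin d × Fin d), wt o = 1 := by
          rw [Fintype.sum_option]
          simp only [hwt]
          rw [Finset.sum_const, hcard]
          rw [hD]
          push_cast
          ring
        have hwt_nonneg : ∀ o, 0 ≤ wt o := by
          intro o
          match o with
          | none => simp only [hwt]; linarith
          | some ij => simp only [hwt]; exact le_of_lt ht0
        have hpt_mem : ∀ o, pt o ∈ T := by
          intro o
          match o with
          | none => exact ⟨hqI, hqZ, hqh, hqsupp⟩
          | some ij =>
            show ((0 : ℝ), t⁻¹ • w ij.1 ij.2, zc ij.1 ij.2) ∈ T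
            refine ⟨?_, hzcZ ij.1 ij.2, ?_, ?_⟩
            · intro k hk
              simp only [Pi.smul_apply, smul_eq_mul]
              exact mul_nonneg (inv_nonneg.2 (le_of_lt ht0)) (hw_sign ij.1 ij.2 k hk)
            · have : (∑ k, a k * (t⁻¹ • w ij.1 ij.2) k) = 0 := by
                simp only [Pi.smul_apply, smul_eq_mul]
                have : ∀ k, a k * (t⁻¹ * w ij.1 ij.2 k) = t⁻¹ * (a k * w ij.1 ij.2 k) := by
                  intro k; ring
                rw [Finset.sum_congr rfl fun k _ => this k, ← Finset.mul_sum,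
                  hw_aw ij.1 ij.2, mul_zero]
              rw [this, h0]
              simp
            · intro k
              simp only [Pi.smul_apply, smul_eq_mul]
              rw [mul_assoc, hw_supp ij.1 ij.2 k, mul_zero]
        have hcombo : F t = ∑ o : Option (Fin d × Fin d), wt o • pt o := by
          rw [Fintype.sum_option]
          simp only [hwt, hpt]
          have hterm : ∀ ij : Fin d × Fin d,
              t • (((0 : ℝ), t⁻¹ • w ij.1 ij.2, zc ij.1 ij.2) :
                ℝ × (Fin d → ℝ) × (Fin d → ℝ))
              = ((0 : ℝ), w ij.1 ij.2, t • zc ij.1 ij.2) := by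
            intro ij
            rw [Prod.smul_def, Prod.smul_def, smul_smul,
              mul_inv_cancel₀ (ne_of_gt ht0), one_smul]
            simp
          rw [Finset.sum_congr rfl fun ij _ => hterm ij]
          rw [hF]
          have hxsum : (∑ ij : Fin d × Fin d, w ij.1 ij.2) = xbar := by
            funext k
            rw [Finset.sum_apply]
            exact hw_sum k
          refine Prod.ext ?_ (Prod.ext ?_ ?_)
          · simp [Prod.fst_sum, Prod.smul_def, smul_eq_mul]
          · simp only [Prod.snd_add, Prod.fst_add, Prod.smul_def, Prod.snd_sum, Prod.fst_sum]
            rw [hxsum]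
          · simp only [Prod.snd_add, Prod.snd_sum, Prod.smul_def]
            rw [← Finset.smul_sum, ← hzsum]
        rw [hcombo]
        exact (convex_convexHull ℝ T).sum_mem (fun o _ => hwt_nonneg o) hwt_sum
          (fun o _ => subset_convexHull ℝ T (hpt_mem o))
      have htd : Tendsto (fun n => F (ε n)) atTop (nhds (q + c)) := by
        rw [← hF0]
        exact (hFcont.tendsto 0).comp hε_tendsto
      exact mem_closure_of_tendsto htd (Filter.Eventually.of_forall fun n => hmem n)
  -- extend from T to closure of convex hull
  have hpre_closed : IsClosed ((fun q => q + c) ⁻¹' C) :=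
    isClosed_closure.preimage (continuous_id.add continuous_const)
  have hpre_convex : Convex ℝ ((fun q => q + c) ⁻¹' C) := by
    intro u hu v hv s t hs ht hst
    simp only [Set.mem_preimage] at hu hv ⊢
    have hmem := hCconv hu hv hs ht hst
    have heq : s • (u + c) + t • (v + c) = s • u + t • v + c := by
      have h1 : s • (u + c) + t • (v + c) = (s • u + t • v) + (s • c + t • c) := by
        rw [smul_add, smul_add]; abel
      rw [h1, ← add_smul, hst, one_smul]
    rwa [heq] at hmem
  have hsub : C ⊆ (fun q => q + c) ⁻¹' C :=
    closure_minimal (convexHull_min key hpre_convex) hpre_closed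
  have hp' : p + c ∈ C := hsub hp
  have hgoal : (p.1, p.2.1 + xbar, p.2.2) = p + c := by
    rw [hc]; ext <;> simp
  rw [hgoal]
  exact hp'
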